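/- arXiv:1808.00245 — 3 statements merged into one kernel-verified Lean document; each statement's English description precedes it below -/
import Mathlib

section
/- Let X, A be finite sets, q(·|x,a) a transition kernel, and define for a stationary randomized strategy g the matrix P(g)(x,y) = ∑_{a} q(y|x,a) g(a|x). Suppose the uniform strategy ḡ(a|x) = 1/|A| yields an irreducible chain P(ḡ), with constants n, δ such that ∑_{j=1}^n P^j(ḡ)(x,y) ≥ δ for all x,y. Let (x_t, a_t) be a process adapted to a filtration (ℱ_t) with P(x_{t+1} = y | ℱ_t) = q(y|x_t, a_t) and P(a_t = a | ℱ_{t-1}, x_t) = π_t(a) where π_t(a) ≥ c > 0. Then for every f : X → [0,∞) and every t, ∑_{j=1}^n E[f(x_{t+j+1}) | ℱ_t] ≥ cⁿ |A|ⁿ δ ∑_{y∈X} f(y) almost surely. -/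
open MeasureTheory Filter

private lemma aux_int {Ω : Type*} {m0 : MeasurableSpace Ω} {μ : Measure Ω} [IsFiniteMeasure μ]
    {Y : Type*} [Fintype Y] [MeasurableSpace Y] [MeasurableSingletonClass Y]
    {ξ : Ω → Y} (hξ : Measurable ξ) (F : Y → ℝ) :
    Integrable (fun ω => F (ξ ω)) μ := by
  obtain ⟨C, hC⟩ := Finite.exists_le fun z => |F z|
  exact (integrable_const C).mono'
    ((measurable_of_countable F).comp hξ).aestronglyMeasurable
    (Filter.Eventually.of_forall fun ω => by
      simpa [Real.norm_eq_abs] using hC (ξ ω))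

private lemma aux_pow_nonneg {X : Type*} [Fintype X] [DecidableEq X] (M : Matrix X X ℝ)
    (h : ∀ i j, 0 ≤ M i j) : ∀ k i j, 0 ≤ (M ^ k) i j := by
  intro k
  induction k with
  | zero =>
    intro i j
    rw [pow_zero]
    by_cases hij : i = j <;> simp [Matrix.one_apply, hij]
  | succ k ih =>
    intro i j
    rw [pow_succ, Matrix.mul_apply]
    exact Finset.sum_nonneg fun z _ => mul_nonneg (ih i z) (h z j)

private lemma aux_alg {X A : Type*} [Fintype X] [Fintype A] [DecidableEq X]
    (q : X → A → X → ℝ) (Pg : Matrix X X ℝ) (cA c : ℝ) (g : X → ℝ)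
    (hsum : ∀ z y, ∑ b, q z b y = cA * Pg z y) (j : ℕ) (z : X) :
    (c * cA)^(j+1) * ∑ y, (Pg ^ (j+1)) z y * g y
      = c * ∑ b, ∑ y, ((c * cA)^j * ∑ w, (Pg ^ j) y w * g w) * q z b y := by
  have h1 : ∀ y : X, ∑ b, ((c * cA)^j * ∑ w, (Pg ^ j) y w * g w) * q z b y
      = ((c * cA)^j * ∑ w, (Pg ^ j) y w * g w) * (cA * Pg z y) := by
    intro y
    rw [← Finset.mul_sum, hsum]
  have L : (c * cA)^(j+1) * ∑ y, (Pg ^ (j+1)) z y * g y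
      = ∑ w, ∑ y, (c * cA)^(j+1) * Pg z w * (Pg ^ j) w y * g y := by
    rw [pow_succ' Pg j]
    simp only [Matrix.mul_apply, Finset.sum_mul, Finset.mul_sum]
    rw [Finset.sum_comm]
    exact Finset.sum_congr rfl fun w _ => Finset.sum_congr rfl fun y _ => by ring
  have R : c * ∑ b, ∑ y, ((c * cA)^j * ∑ w, (Pg ^ j) y w * g w) * q z b y
      = ∑ y, ∑ w, (c * cA)^(j+1) * Pg z y * (Pg ^ j) y w * g w := by
    rw [Finset.sum_comm]
    simp only [h1]
    simp only [Finset.mul_sum, Finset.sum_mul]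
    exact Finset.sum_congr rfl fun y _ => Finset.sum_congr rfl fun w _ => by ring
  rw [L, R]

/-- One-step lower bound (Lemma 1): under persistent exploration `π_t(a) ≥ c`
and irreducibility of the uniform-strategy chain (constants `n, δ`), for every
nonnegative `f : X → ℝ` and every `t`,
`∑_{j=1}^n E[f(x_{t+j+1}) | ℱ_t] ≥ cⁿ |A|ⁿ δ ∑_y f(y)` a.s. -/
theorem stmt_6 {X A : Type*} [Fintype X] [Fintype A] [Nonempty X] [Nonempty A]
    [DecidableEq X] [DecidableEq A]
    [MeasurableSpace X] [MeasurableSingletonClass X]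
    [MeasurableSpace A] [MeasurableSingletonClass A]
    {Ω : Type*} {m0 : MeasurableSpace Ω} (μ : Measure Ω) [IsProbabilityMeasure μ]
    (ℱ : Filtration ℕ m0)
    (q : X → A → X → ℝ)
    (hqnn : ∀ x a y, 0 ≤ q x a y) (hq1 : ∀ x a, ∑ y, q x a y = 1)
    (x : ℕ → Ω → X) (a : ℕ → Ω → A)
    (hx : ∀ t, Measurable[ℱ t] (x t)) (ha : ∀ t, Measurable[ℱ t] (a t))
    -- transition law: P(x_{t+1} = y | ℱ_t) = q(y | x_t, a_t)
    (hkernel : ∀ t (y : X),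
      μ[(fun ω => if x (t+1) ω = y then (1:ℝ) else 0) | ℱ t]
        =ᵐ[μ] fun ω => q (x t ω) (a t ω) y)
    -- learning strategy with persistent exploration: P(a_t = b | ℱ_{t-1}, x_t) = π_t(b) ≥ c
    (π : ℕ → A → Ω → ℝ) (c : ℝ) (hc : 0 < c)
    (hπc : ∀ t b ω, c ≤ π t b ω)
    (hπ : ∀ t (b : A), 1 ≤ t →
      μ[(fun ω => if a t ω = b then (1:ℝ) else 0)
          | (ℱ (t-1)) ⊔ MeasurableSpace.comap (x t) inferInstance]
        =ᵐ[μ] π t b)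
    -- constants for the uniform-strategy chain P(ḡ)
    (Pg : Matrix X X ℝ)
    (hPg : ∀ x' y, Pg x' y = (∑ b, q x' b y) / (Fintype.card A))
    (n : ℕ) (hn : 1 ≤ n) (δ : ℝ) (hδ : 0 < δ)
    (hirr : ∀ x' y, δ ≤ ∑ j ∈ Finset.Icc 1 n, (Pg ^ j) x' y) :
    ∀ (f : X → ℝ), (∀ y, 0 ≤ f y) → ∀ t,
      ∀ᵐ ω ∂μ, c ^ n * (Fintype.card A : ℝ) ^ n * δ * ∑ y, f y ≤
        ∑ j ∈ Finset.Icc 1 n, (μ[(fun ω' => f (x (t+j+1) ω')) | ℱ t]) ω := by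
  classical
  intro f hf t
  have hcA0 : (0:ℝ) < (Fintype.card A : ℝ) := by
    exact_mod_cast Fintype.card_pos (α := A)
  have hPgnn : ∀ i j, 0 ≤ Pg i j := by
    intro i j
    rw [hPg]
    exact div_nonneg (Finset.sum_nonneg fun b _ => hqnn i b j) (le_of_lt hcA0)
  have hxm : ∀ s, Measurable (x s) := fun s => (hx s).mono (ℱ.le s) le_rfl
  have ham : ∀ s, Measurable (a s) := fun s => (ha s).mono (ℱ.le s) le_rfl
  have hint1 : ∀ (s : ℕ) (F : X → ℝ), Integrable (fun ω => F (x s ω)) μ := fun s F =>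
    aux_int (hxm s) F
  have hintA : ∀ (s : ℕ) (F : A → ℝ), Integrable (fun ω => F (a s ω)) μ := fun s F =>
    aux_int (ham s) F
  have hint2 : ∀ (s : ℕ) (F : X → A → ℝ), Integrable (fun ω => F (x s ω) (a s ω)) μ := by
    intro s F
    exact aux_int ((hxm s).prodMk (ham s)) (fun p : X × A => F p.1 p.2)
  have h𝒢le : ∀ s, (ℱ s ⊔ MeasurableSpace.comap (x (s+1)) inferInstance) ≤ m0 :=
    fun s => sup_le (ℱ.le s) (measurable_iff_comap_le.mp (hxm (s+1)))
  have h𝒢F : ∀ s, (ℱ s ⊔ MeasurableSpace.comap (x (s+1)) inferInstance) ≤ ℱ (s+1) :=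
    fun s => sup_le (ℱ.mono (Nat.le_succ s)) (measurable_iff_comap_le.mp (hx (s+1)))
  have hxG : ∀ s, Measurable[ℱ s ⊔ MeasurableSpace.comap (x (s+1)) inferInstance] (x (s+1)) :=
    fun s => measurable_iff_comap_le.mpr le_sup_right
  -- Step A : one transition step conditioned on ℱ s
  have stepA : ∀ (s : ℕ) (g : X → ℝ),
      μ[(fun ω => g (x (s+1) ω)) | ℱ s] =ᵐ[μ] fun ω => ∑ y, g y * q (x s ω) (a s ω) y := by
    intro s g
    have hrw : (fun ω => g (x (s+1) ω))
        = ∑ y : X, fun ω => g y * (if x (s+1) ω = y then (1:ℝ) else 0) := by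
      funext ω
      simp [Finset.sum_apply, mul_ite, mul_one, mul_zero]
    rw [hrw]
    have hintind : ∀ y ∈ (Finset.univ : Finset X),
        Integrable (fun ω => g y * (if x (s+1) ω = y then (1:ℝ) else 0)) μ := fun y _ =>
      hint1 (s+1) (fun z => g y * (if z = y then 1 else 0))
    refine (condExp_finset_sum hintind (ℱ s)).trans ?_
    have hterm : ∀ y : X, (μ[(fun ω => g y * (if x (s+1) ω = y then (1:ℝ) else 0)) | ℱ s])
        =ᵐ[μ] fun ω => g y * q (x s ω) (a s ω) y := by
      intro y
      have h1 : (fun ω => g y * (if x (s+1) ω = y then (1:ℝ) else 0))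
          = g y • (fun ω => if x (s+1) ω = y then (1:ℝ) else 0) := rfl
      rw [h1]
      refine (condExp_smul (g y) _ (ℱ s)).trans ?_
      filter_upwards [hkernel s y] with ω hω
      simp [Pi.smul_apply, smul_eq_mul, hω]
    filter_upwards [ae_all_iff.mpr hterm] with ω hω
    simp only [Finset.sum_apply]
    exact Finset.sum_congr rfl fun y _ => hω y
  -- Step B : action-averaging step conditioned on ℱ s ⊔ σ(x (s+1))
  have stepB : ∀ (s : ℕ) (h : X → A → ℝ),
      μ[(fun ω => h (x (s+1) ω) (a (s+1) ω)) |
          ℱ s ⊔ MeasurableSpace.comap (x (s+1)) inferInstance]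
        =ᵐ[μ] fun ω => ∑ b, h (x (s+1) ω) b * π (s+1) b ω := by
    intro s h
    have hrw : (fun ω => h (x (s+1) ω) (a (s+1) ω))
        = ∑ b : A, fun ω => h (x (s+1) ω) b * (if a (s+1) ω = b then (1:ℝ) else 0) := by
      funext ω
      simp [Finset.sum_apply, mul_ite, mul_one, mul_zero]
    rw [hrw]
    have hintind : ∀ b ∈ (Finset.univ : Finset A),
        Integrable (fun ω => h (x (s+1) ω) b * (if a (s+1) ω = b then (1:ℝ) else 0)) μ :=
      fun b _ => hint2 (s+1) (fun z b' => h z b * (if b' = b then 1 else 0))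
    refine (condExp_finset_sum hintind _).trans ?_
    have hterm : ∀ b : A,
        (μ[(fun ω => h (x (s+1) ω) b * (if a (s+1) ω = b then (1:ℝ) else 0)) |
            ℱ s ⊔ MeasurableSpace.comap (x (s+1)) inferInstance])
          =ᵐ[μ] fun ω => h (x (s+1) ω) b * π (s+1) b ω := by
      intro b
      have hsm : StronglyMeasurable[ℱ s ⊔ MeasurableSpace.comap (x (s+1)) inferInstance]
          (fun ω => h (x (s+1) ω) b) :=
        ((measurable_of_countable (fun z => h z b)).comp (hxG s)).stronglyMeasurable
      have hfg : (fun ω => h (x (s+1) ω) b * (if a (s+1) ω = b then (1:ℝ) else 0))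
          = (fun ω => h (x (s+1) ω) b) * (fun ω => if a (s+1) ω = b then (1:ℝ) else 0) := rfl
      rw [hfg]
      have hmul := condExp_mul_of_stronglyMeasurable_left hsm
        (hint2 (s+1) (fun z b' => h z b * (if b' = b then 1 else 0)))
        (hintA (s+1) (fun b' => if b' = b then (1:ℝ) else 0))
      refine hmul.trans ?_
      have hp := hπ (s+1) b (Nat.le_add_left 1 s)
      simp only [Nat.add_sub_cancel] at hp
      filter_upwards [hp] with ω hω
      simp only [Pi.mul_apply, hω]
    filter_upwards [ae_all_iff.mpr hterm] with ω hω
    simp only [Finset.sum_apply]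
    exact Finset.sum_congr rfl fun b _ => hω b
  have hsum_b : ∀ z y, ∑ b, q z b y = (Fintype.card A : ℝ) * Pg z y := by
    intro z y
    rw [hPg]
    field_simp
  -- Key induction : j steps starting from x (s+1), conditioned on ℱ s ⊔ σ(x (s+1))
  have keyE : ∀ (j : ℕ), ∀ (s : ℕ) (g : X → ℝ), (∀ y, 0 ≤ g y) →
      (fun ω => (c * (Fintype.card A : ℝ))^j * ∑ y, (Pg ^ j) (x (s+1) ω) y * g y)
        ≤ᵐ[μ] μ[(fun ω => g (x (s+1+j) ω)) |
            ℱ s ⊔ MeasurableSpace.comap (x (s+1)) inferInstance] := by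
    intro j
    induction j with
    | zero =>
      intro s g hg
      have hsm : StronglyMeasurable[ℱ s ⊔ MeasurableSpace.comap (x (s+1)) inferInstance]
          (fun ω => g (x (s+1) ω)) :=
        ((measurable_of_countable g).comp (hxG s)).stronglyMeasurable
      have hLHS : (fun ω => (c * (Fintype.card A : ℝ))^0 * ∑ y, (Pg ^ 0) (x (s+1) ω) y * g y)
          = fun ω => g (x (s+1) ω) := by
        funext ω
        simp [Matrix.one_apply, ite_mul, one_mul, zero_mul, Finset.sum_ite_eq]
      simp only [Nat.add_zero]
      rw [hLHS, condExp_of_stronglyMeasurable (h𝒢le s) hsm (hint1 (s+1) g)]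
    | succ j ih =>
      intro s g hg
      have hidx : s+1+(j+1) = s+1+1+j := by omega
      rw [hidx]
      have hGnn : ∀ z, 0 ≤ (c * (Fintype.card A : ℝ))^j * ∑ y, (Pg ^ j) z y * g y := fun z =>
        mul_nonneg (pow_nonneg (le_of_lt (mul_pos hc hcA0)) j)
          (Finset.sum_nonneg fun y _ => mul_nonneg (aux_pow_nonneg Pg hPgnn j z y) (hg y))
      have hIH := ih (s+1) g hg
      have h23 : μ[(fun ω => (c * (Fintype.card A : ℝ))^j *
              ∑ y, (Pg ^ j) (x (s+1+1) ω) y * g y) |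
            ℱ s ⊔ MeasurableSpace.comap (x (s+1)) inferInstance]
          ≤ᵐ[μ] μ[(fun ω => g (x (s+1+1+j) ω)) |
            ℱ s ⊔ MeasurableSpace.comap (x (s+1)) inferInstance] := by
        have hle : (ℱ s ⊔ MeasurableSpace.comap (x (s+1)) inferInstance)
            ≤ (ℱ (s+1) ⊔ MeasurableSpace.comap (x (s+1+1)) inferInstance) :=
          le_trans (h𝒢F s) le_sup_left
        have htow := condExp_condExp_of_le hle (h𝒢le (s+1))
          (f := fun ω => g (x (s+1+1+j) ω)) (μ := μ)
        exact (condExp_mono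
          (hint1 (s+1+1) (fun z => (c * (Fintype.card A : ℝ))^j * ∑ y, (Pg ^ j) z y * g y))
          integrable_condExp hIH).trans htow.le
      have h45 : μ[(fun ω => (c * (Fintype.card A : ℝ))^j *
              ∑ y, (Pg ^ j) (x (s+1+1) ω) y * g y) |
            ℱ s ⊔ MeasurableSpace.comap (x (s+1)) inferInstance]
          =ᵐ[μ] μ[(fun ω => ∑ y, ((c * (Fintype.card A : ℝ))^j * ∑ w, (Pg ^ j) y w * g w) *
              q (x (s+1) ω) (a (s+1) ω) y) |
            ℱ s ⊔ MeasurableSpace.comap (x (s+1)) inferInstance] := by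
        have h4 := (condExp_condExp_of_le (h𝒢F s) (ℱ.le (s+1))
          (f := fun ω => (c * (Fintype.card A : ℝ))^j * ∑ y, (Pg ^ j) (x (s+1+1) ω) y * g y)
          (μ := μ)).symm
        exact h4.trans (condExp_congr_ae
          (stepA (s+1) (fun z => (c * (Fintype.card A : ℝ))^j * ∑ w, (Pg ^ j) z w * g w)))
      have h6 := stepB s
        (fun z b => ∑ y, ((c * (Fintype.card A : ℝ))^j * ∑ w, (Pg ^ j) y w * g w) * q z b y)
      have h7 : (fun ω => (c * (Fintype.card A : ℝ))^(j+1) *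
            ∑ y, (Pg ^ (j+1)) (x (s+1) ω) y * g y)
          ≤ᵐ[μ] fun ω => ∑ b,
              (∑ y, ((c * (Fintype.card A : ℝ))^j * ∑ w, (Pg ^ j) y w * g w) *
                q (x (s+1) ω) b y) * π (s+1) b ω := by
        refine Filter.Eventually.of_forall fun ω => ?_
        dsimp only
        rw [aux_alg q Pg (Fintype.card A : ℝ) c g hsum_b j (x (s+1) ω)]
        rw [Finset.mul_sum]
        refine Finset.sum_le_sum fun b _ => ?_
        have hSb : 0 ≤ ∑ y, ((c * (Fintype.card A : ℝ))^j * ∑ w, (Pg ^ j) y w * g w) *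
            q (x (s+1) ω) b y :=
          Finset.sum_nonneg fun y _ => mul_nonneg (hGnn y) (hqnn _ b y)
        calc c * ∑ y, ((c * (Fintype.card A : ℝ))^j * ∑ w, (Pg ^ j) y w * g w) *
              q (x (s+1) ω) b y
            ≤ π (s+1) b ω * ∑ y, ((c * (Fintype.card A : ℝ))^j * ∑ w, (Pg ^ j) y w * g w) *
              q (x (s+1) ω) b y :=
              mul_le_mul_of_nonneg_right (hπc (s+1) b ω) hSb
          _ = (∑ y, ((c * (Fintype.card A : ℝ))^j * ∑ w, (Pg ^ j) y w * g w) *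
              q (x (s+1) ω) b y) * π (s+1) b ω := by ring
      exact h7.trans (h6.symm.le.trans (h45.symm.le.trans h23))
  -- one more conditioning step down to ℱ t
  have keyF : ∀ (j : ℕ),
      (fun ω => ∑ z, ((c * (Fintype.card A : ℝ))^j * ∑ y, (Pg ^ j) z y * f y) *
          q (x t ω) (a t ω) z)
        ≤ᵐ[μ] μ[(fun ω => f (x (t+1+j) ω)) | ℱ t] := by
    intro j
    have h1 := keyE j t f hf
    have htow := condExp_condExp_of_le
      (le_sup_left : (ℱ t : MeasurableSpace Ω) ≤
        ℱ t ⊔ MeasurableSpace.comap (x (t+1)) inferInstance) (h𝒢le t)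
      (f := fun ω => f (x (t+1+j) ω)) (μ := μ)
    have hmono := condExp_mono (m := (ℱ t : MeasurableSpace Ω))
      (hint1 (t+1) (fun z => (c * (Fintype.card A : ℝ))^j * ∑ y, (Pg ^ j) z y * f y))
      integrable_condExp h1
    have h2 := stepA t (fun z => (c * (Fintype.card A : ℝ))^j * ∑ y, (Pg ^ j) z y * f y)
    exact h2.symm.le.trans (hmono.trans htow.le)
  -- persistent exploration forces c * |A| ≤ 1
  have hccA1 : c * (Fintype.card A : ℝ) ≤ 1 := by
    have hone : (fun _ : Ω => (1:ℝ))
        = ∑ b : A, fun ω => if a 1 ω = b then (1:ℝ) else 0 := by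
      funext ω
      simp [Finset.sum_apply]
    have hintind : ∀ b ∈ (Finset.univ : Finset A),
        Integrable (fun ω => if a 1 ω = b then (1:ℝ) else 0) μ :=
      fun b _ => hintA 1 (fun b' => if b' = b then (1:ℝ) else 0)
    have h2 : (fun _ : Ω => (1:ℝ)) =ᵐ[μ] fun ω => ∑ b, π 1 b ω := by
      have h3 := condExp_const (h𝒢le 0) (1:ℝ) (μ := μ)
      have h4 : μ[(fun _ : Ω => (1:ℝ)) |
          ℱ 0 ⊔ MeasurableSpace.comap (x 1) inferInstance] =ᵐ[μ] fun ω => ∑ b, π 1 b ω := by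
        rw [hone]
        refine (condExp_finset_sum hintind _).trans ?_
        have hterm : ∀ b : A,
            (μ[(fun ω => if a 1 ω = b then (1:ℝ) else 0) |
                ℱ 0 ⊔ MeasurableSpace.comap (x 1) inferInstance])
              =ᵐ[μ] π 1 b := fun b => hπ 1 b le_rfl
        filter_upwards [ae_all_iff.mpr hterm] with ω hω
        simp only [Finset.sum_apply]
        exact Finset.sum_congr rfl fun b _ => hω b
      rw [h3] at h4
      exact h4
    obtain ⟨ω, hω⟩ := h2.exists
    calc c * (Fintype.card A : ℝ) = ∑ _b : A, c := by
          rw [Finset.sum_const, Finset.card_univ, nsmul_eq_mul]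
          ring
      _ ≤ ∑ b, π 1 b ω := Finset.sum_le_sum fun b _ => hπc 1 b ω
      _ = 1 := hω.symm
  have hccAnn : (0:ℝ) ≤ c * (Fintype.card A : ℝ) := le_of_lt (mul_pos hc hcA0)
  -- final assembly
  have hall : ∀ᵐ ω ∂μ, ∀ j : ℕ,
      ∑ z, ((c * (Fintype.card A : ℝ))^j * ∑ y, (Pg ^ j) z y * f y) * q (x t ω) (a t ω) z
        ≤ (μ[(fun ω' => f (x (t+j+1) ω')) | ℱ t]) ω := by
    refine ae_all_iff.mpr fun j => ?_
    have hidx : t+1+j = t+j+1 := by omega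
    have hkf := keyF j
    rw [hidx] at hkf
    exact hkf
  filter_upwards [hall] with ω hω
  have hQnn : ∀ z, 0 ≤ q (x t ω) (a t ω) z := fun z => hqnn _ _ z
  have hQ1 : ∑ z, q (x t ω) (a t ω) z = 1 := hq1 _ _
  have hz : ∀ z : X,
      ((c * (Fintype.card A : ℝ))^n * (δ * ∑ y, f y)) * q (x t ω) (a t ω) z
        ≤ ∑ j ∈ Finset.Icc 1 n,
            ((c * (Fintype.card A : ℝ))^j * ∑ y, (Pg ^ j) z y * f y) * q (x t ω) (a t ω) z := by
    intro z
    have h1 : δ * ∑ y, f y ≤ ∑ j ∈ Finset.Icc 1 n, ∑ y, (Pg ^ j) z y * f y := by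
      calc δ * ∑ y, f y = ∑ y, δ * f y := Finset.mul_sum _ _ _
        _ ≤ ∑ y, (∑ j ∈ Finset.Icc 1 n, (Pg ^ j) z y) * f y :=
            Finset.sum_le_sum fun y _ => mul_le_mul_of_nonneg_right (hirr z y) (hf y)
        _ = ∑ j ∈ Finset.Icc 1 n, ∑ y, (Pg ^ j) z y * f y := by
            simp only [Finset.sum_mul]
            rw [Finset.sum_comm]
    have h2 : (c * (Fintype.card A : ℝ))^n * (δ * ∑ y, f y)
        ≤ ∑ j ∈ Finset.Icc 1 n, (c * (Fintype.card A : ℝ))^j * ∑ y, (Pg ^ j) z y * f y := by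
      calc (c * (Fintype.card A : ℝ))^n * (δ * ∑ y, f y)
          ≤ (c * (Fintype.card A : ℝ))^n * ∑ j ∈ Finset.Icc 1 n, ∑ y, (Pg ^ j) z y * f y :=
            mul_le_mul_of_nonneg_left h1 (pow_nonneg hccAnn n)
        _ = ∑ j ∈ Finset.Icc 1 n, (c * (Fintype.card A : ℝ))^n * ∑ y, (Pg ^ j) z y * f y :=
            Finset.mul_sum _ _ _
        _ ≤ ∑ j ∈ Finset.Icc 1 n, (c * (Fintype.card A : ℝ))^j * ∑ y, (Pg ^ j) z y * f y :=
            Finset.sum_le_sum fun j hj => mul_le_mul_of_nonneg_right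
              (pow_le_pow_of_le_one hccAnn hccA1 (Finset.mem_Icc.mp hj).2)
              (Finset.sum_nonneg fun y _ =>
                mul_nonneg (aux_pow_nonneg Pg hPgnn j z y) (hf y))
    calc ((c * (Fintype.card A : ℝ))^n * (δ * ∑ y, f y)) * q (x t ω) (a t ω) z
        ≤ (∑ j ∈ Finset.Icc 1 n, (c * (Fintype.card A : ℝ))^j * ∑ y, (Pg ^ j) z y * f y) *
            q (x t ω) (a t ω) z := mul_le_mul_of_nonneg_right h2 (hQnn z)
      _ = ∑ j ∈ Finset.Icc 1 n,
            ((c * (Fintype.card A : ℝ))^j * ∑ y, (Pg ^ j) z y * f y) * q (x t ω) (a t ω) z :=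
          Finset.sum_mul _ _ _
  calc c ^ n * (Fintype.card A : ℝ) ^ n * δ * ∑ y, f y
      = ∑ z, ((c * (Fintype.card A : ℝ))^n * (δ * ∑ y, f y)) * q (x t ω) (a t ω) z := by
        rw [← Finset.mul_sum, hQ1, mul_one, mul_pow]
        ring
    _ ≤ ∑ z, ∑ j ∈ Finset.Icc 1 n,
          ((c * (Fintype.card A : ℝ))^j * ∑ y, (Pg ^ j) z y * f y) * q (x t ω) (a t ω) z :=
        Finset.sum_le_sum fun z _ => hz z
    _ = ∑ j ∈ Finset.Icc 1 n, ∑ z,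
          ((c * (Fintype.card A : ℝ))^j * ∑ y, (Pg ^ j) z y * f y) * q (x t ω) (a t ω) z :=
        Finset.sum_comm
    _ ≤ ∑ j ∈ Finset.Icc 1 n, (μ[(fun ω' => f (x (t+j+1) ω')) | ℱ t]) ω :=
        Finset.sum_le_sum fun j _ => hω j
end

section
/- Suppose every state is visited infinitely often a.s., the learning strategy satisfies π_t(a) ≥ c(N_t(x_t)) > 0 for a function c : ℕ → (0,∞), the learning rate is α_t = 1/φ(N_t(x_t)), and ∑_{t≥1} c(t)/φ(t) = ∞ and ∑_{t≥1} 1/φ(t)² < ∞. Then for every (x,a), ∑_t α_t 1{x_t=x, a_t=a} = ∞ and ∑_t α_t² 1{x_t=x, a_t=a} < ∞ almost surely. -/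
open MeasureTheory Filter

/-- Reindexing a sum over visit times of `x0` by the local clock. -/
lemma aux_reindex_sum {X Ω : Type*} [DecidableEq X] (x : ℕ → Ω → X) (x0 : X) (ω : Ω)
    (F : ℕ → ℝ) (T : ℕ) :
    ∑ t ∈ Finset.range T,
        (if x t ω = x0 then F (∑ k ∈ Finset.range (t + 1), if x k ω = x0 then 1 else 0) else 0)
      = ∑ j ∈ Finset.range (∑ k ∈ Finset.range T, if x k ω = x0 then 1 else 0), F (j + 1) := by
  induction T with
  | zero => simp
  | succ T ih =>
    rw [Finset.sum_range_succ, ih,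
      Finset.sum_range_succ (fun k => if x k ω = x0 then 1 else 0)]
    by_cases h : x T ω = x0
    · rw [if_pos h, if_pos h, Finset.sum_range_succ (fun j => F (j + 1))]
    · rw [if_neg h, if_neg h, add_zero, add_zero]

/-- Decaying exploration consistent with the rate: if every state is visited
infinitely often a.s., the learning strategy satisfies
`π_t(a) ≥ c(N_t(x_t)) > 0`, the learning rate is `α_t = 1/φ(N_t(x_t))` and
`∑ c(t)/φ(t) = ∞`, `∑ 1/φ(t)² < ∞`, then the Robbins–Monro conditions hold
for `γ_t = α_t 1{x_t = x, a_t = a}` for every `(x,a)`, almost surely. -/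
theorem stmt_12 {X A : Type*} [Fintype X] [Fintype A] [Nonempty X] [Nonempty A]
    [DecidableEq X] [DecidableEq A]
    [MeasurableSpace X] [MeasurableSingletonClass X]
    [MeasurableSpace A] [MeasurableSingletonClass A]
    {Ω : Type*} {m0 : MeasurableSpace Ω} (μ : Measure Ω) [IsProbabilityMeasure μ]
    (ℱ : Filtration ℕ m0)
    (q : X → A → X → ℝ)
    (hqnn : ∀ x a y, 0 ≤ q x a y) (hq1 : ∀ x a, ∑ y, q x a y = 1)
    (x : ℕ → Ω → X) (a : ℕ → Ω → A)
    (hx : ∀ t, Measurable[ℱ t] (x t)) (ha : ∀ t, Measurable[ℱ t] (a t))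
    (hkernel : ∀ t (y : X),
      μ[(fun ω => if x (t+1) ω = y then (1:ℝ) else 0) | ℱ t]
        =ᵐ[μ] fun ω => q (x t ω) (a t ω) y)
    -- local clocks of all states
    (N : ℕ → X → Ω → ℕ)
    (hN : ∀ t x' ω, N t x' ω = ∑ k ∈ Finset.range (t + 1), if x k ω = x' then 1 else 0)
    -- every state is visited infinitely often a.s.
    (hio : ∀ x' : X, ∀ᵐ ω ∂μ, Filter.Tendsto (fun t => N t x' ω) atTop atTop)
    -- learning strategy with exploration bounded below by c(N_t(x_t))
    (π : ℕ → A → Ω → ℝ) (c : ℕ → ℝ) (hcpos : ∀ j, 0 < c j)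
    (hπc : ∀ t b ω, c (N t (x t ω) ω) ≤ π t b ω)
    (hπ : ∀ t (b : A), 1 ≤ t →
      μ[(fun ω => if a t ω = b then (1:ℝ) else 0)
          | (ℱ (t-1)) ⊔ MeasurableSpace.comap (x t) inferInstance]
        =ᵐ[μ] π t b)
    -- the learning rate α_t = 1/φ(N_t(x_t))
    (φ : ℕ → ℝ) (hφpos : ∀ t, 0 < φ t)
    (hdiv : ¬ Summable (fun t : ℕ => c (t + 1) / φ (t + 1)))
    (hsq : Summable (fun t : ℕ => (1 / φ (t + 1)) ^ 2))
    (α : ℕ → Ω → ℝ) (hα : ∀ t ω, α t ω = 1 / φ (N t (x t ω) ω)) :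
    ∀ (x0 : X) (a0 : A), ∀ᵐ ω ∂μ,
      Filter.Tendsto (fun T : ℕ => ∑ t ∈ Finset.range T,
        (if x t ω = x0 ∧ a t ω = a0 then α t ω else 0)) atTop atTop ∧
      Summable (fun t : ℕ =>
        (if x t ω = x0 ∧ a t ω = a0 then α t ω else 0) ^ 2) := by
  intro x0 a0
  -- upper bound on the learning rates
  set S : ℝ := ∑' t : ℕ, (1 / φ (t + 1)) ^ 2 with hSdef
  set R : ℝ := Real.sqrt S with hRdef
  have hR0 : 0 ≤ R := Real.sqrt_nonneg _
  have hR : ∀ j : ℕ, 1 / φ (j + 1) ≤ R := by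
    intro j
    have h1 : (1 / φ (j + 1)) ^ 2 ≤ S :=
      Summable.le_tsum hsq j fun i _ => sq_nonneg _
    have h2 : 0 ≤ 1 / φ (j + 1) := by
      have := hφpos (j + 1); positivity
    calc 1 / φ (j + 1) = Real.sqrt ((1 / φ (j + 1)) ^ 2) := by
          rw [Real.sqrt_sq h2]
      _ ≤ R := Real.sqrt_le_sqrt h1
  -- the filtration 𝒢 n = ℱ (n-1) ⊔ σ(x n)
  have hcomap_le : ∀ n, MeasurableSpace.comap (x n) inferInstance ≤ ℱ n :=
    fun n => (hx n).comap_le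
  have hGF : ∀ n, (ℱ (n - 1) ⊔ MeasurableSpace.comap (x n) inferInstance) ≤ ℱ n :=
    fun n => sup_le (ℱ.mono (Nat.pred_le n)) (hcomap_le n)
  set 𝒢 : Filtration ℕ m0 :=
    { seq := fun n => ℱ (n - 1) ⊔ MeasurableSpace.comap (x n) inferInstance
      mono' := monotone_nat_of_le_succ fun n => (hGF n).trans le_sup_left
      le' := fun n => (hGF n).trans (ℱ.le n) } with h𝒢def
  have h𝒢 : ∀ t, (𝒢 t : MeasurableSpace Ω)
      = ℱ (t - 1) ⊔ MeasurableSpace.comap (x t) inferInstance := fun _ => rfl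
  have h𝒢F : ∀ t, (𝒢 t : MeasurableSpace Ω) ≤ ℱ t := fun t => hGF t
  have hF𝒢 : ∀ t, (ℱ t : MeasurableSpace Ω) ≤ 𝒢 (t + 1) := fun t => le_sup_left
  -- the processes
  set I : ℕ → Ω → ℝ := fun t ω => if a t ω = a0 then 1 else 0 with hIdef
  set p : ℕ → Ω → ℝ := fun t => μ[I t | 𝒢 t] with hpdef
  set w : ℕ → Ω → ℝ := fun t ω => if x t ω = x0 then 1 / φ (N (t - 1) x0 ω + 1) else 0
    with hwdef
  set Δ : ℕ → Ω → ℝ := fun t => if t = 0 then 0 else w t * I t - w t * p t with hΔdef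
  set M : ℕ → Ω → ℝ := fun n => ∑ t ∈ Finset.range n, Δ t with hMdef
  -- measurability
  have hNmeas : ∀ s : ℕ, Measurable[ℱ s] fun ω => N s x0 ω := by
    intro s
    have : (fun ω => N s x0 ω)
        = fun ω => ∑ k ∈ Finset.range (s + 1), if x k ω = x0 then 1 else 0 :=
      funext fun ω => hN s x0 ω
    rw [this]
    refine Finset.measurable_sum _ fun k hk => ?_
    have hk' : k ≤ s := Nat.lt_succ_iff.mp (Finset.mem_range.mp hk)
    exact Measurable.ite (((hx k).mono (ℱ.mono hk') le_rfl) (measurableSet_singleton x0))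
      measurable_const measurable_const
  have hxm : ∀ t, Measurable[𝒢 t] (x t) := fun t =>
    Measurable.of_comap_le (by rw [h𝒢 t]; exact le_sup_right)
  have hwmeas : ∀ t, Measurable[𝒢 t] (w t) := by
    intro t
    rw [hwdef]
    refine Measurable.ite ((hxm t) (measurableSet_singleton x0)) ?_ measurable_const
    exact ((measurable_from_top (f := fun n : ℕ => 1 / φ (n + 1))).comp
      (hNmeas (t - 1))).mono le_sup_left le_rfl
  have hwm0 : ∀ t, Measurable (w t) := fun t => (hwmeas t).mono (𝒢.le t) le_rfl
  have hImeasF : ∀ t, Measurable[ℱ t] (I t) := by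
    intro t
    rw [hIdef]
    exact Measurable.ite ((ha t) (measurableSet_singleton a0)) measurable_const
      measurable_const
  have hImeas : ∀ t, Measurable (I t) := fun t => (hImeasF t).mono (ℱ.le t) le_rfl
  have hp_meas : ∀ t, StronglyMeasurable[𝒢 t] (p t) := fun t => stronglyMeasurable_condExp
  -- pointwise bounds
  have hIabs : ∀ t ω, |I t ω| ≤ 1 := by
    intro t ω; rw [hIdef]; dsimp only; split_ifs <;> simp
  have hw_nonneg : ∀ t ω, 0 ≤ w t ω := by
    intro t ω; rw [hwdef]; dsimp only; split_ifs with h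
    · have := hφpos (N (t - 1) x0 ω + 1); positivity
    · exact le_refl 0
  have hw_le : ∀ t ω, w t ω ≤ R := by
    intro t ω; rw [hwdef]; dsimp only; split_ifs with h
    · exact hR _
    · exact hR0
  -- integrability
  have hbdd_int : ∀ (f : Ω → ℝ) (C : ℝ), AEStronglyMeasurable f μ →
      (∀ᵐ ω ∂μ, |f ω| ≤ C) → Integrable f μ := fun f C hfm hfb =>
    Integrable.mono' (integrable_const C) hfm (by simpa [Real.norm_eq_abs] using hfb)
  have hI_int : ∀ t, Integrable (I t) μ := fun t =>
    hbdd_int _ 1 (hImeas t).aestronglyMeasurable (Filter.Eventually.of_forall (hIabs t))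
  have hp_nonneg : ∀ t, (0 : Ω → ℝ) ≤ᵐ[μ] p t := by
    intro t
    refine condExp_nonneg (Filter.Eventually.of_forall fun ω => ?_)
    rw [hIdef]; dsimp only [Pi.zero_apply]; split_ifs <;> norm_num
  have hp_le_one : ∀ t, p t ≤ᵐ[μ] fun _ => (1 : ℝ) := by
    intro t
    have h1 : μ[I t | 𝒢 t] ≤ᵐ[μ] μ[(fun _ => (1:ℝ)) | 𝒢 t] := by
      refine condExp_mono (hI_int t) (integrable_const 1)
        (Filter.Eventually.of_forall fun ω => ?_)
      rw [hIdef]; dsimp only; split_ifs <;> norm_num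
    rwa [condExp_const (𝒢.le t)] at h1
  have hp_abs : ∀ t, ∀ᵐ ω ∂μ, |p t ω| ≤ 1 := by
    intro t
    filter_upwards [hp_nonneg t, hp_le_one t] with ω h1 h2
    simp only [Pi.zero_apply] at h1
    rw [abs_le]; exact ⟨by linarith, h2⟩
  have hp_int : ∀ t, Integrable (p t) μ := fun t => integrable_condExp
  have hwI_int : ∀ t, Integrable (w t * I t) μ := by
    intro t
    refine hbdd_int _ R ((hwm0 t).mul (hImeas t)).aestronglyMeasurable
      (Filter.Eventually.of_forall fun ω => ?_)
    have := abs_mul (w t ω) (I t ω)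
    calc |(w t * I t) ω| = |w t ω| * |I t ω| := abs_mul _ _
      _ ≤ R * 1 := by
          refine mul_le_mul ?_ (hIabs t ω) (abs_nonneg _) hR0
          rw [abs_of_nonneg (hw_nonneg t ω)]; exact hw_le t ω
      _ = R := mul_one R
  have hwp_int : ∀ t, Integrable (w t * p t) μ := by
    intro t
    refine hbdd_int _ R ((hwm0 t).aestronglyMeasurable.mul
      ((hp_meas t).mono (𝒢.le t)).aestronglyMeasurable) ?_
    filter_upwards [hp_abs t] with ω hpω
    calc |(w t * p t) ω| = |w t ω| * |p t ω| := abs_mul _ _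
      _ ≤ R * 1 := by
          refine mul_le_mul ?_ hpω (abs_nonneg _) hR0
          rw [abs_of_nonneg (hw_nonneg t ω)]; exact hw_le t ω
      _ = R := mul_one R
  have hΔ_int : ∀ t, Integrable (Δ t) μ := by
    intro t
    by_cases ht : t = 0
    · simp only [hΔdef, if_pos ht]; exact integrable_zero _ _ _
    · simp only [hΔdef, if_neg ht]; exact (hwI_int t).sub (hwp_int t)
  have hMapply : ∀ n, M n = fun ω' => ∑ t ∈ Finset.range n, Δ t ω' := by
    intro n; rw [hMdef]; exact funext fun ω' => Finset.sum_apply _ _ _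
  have hM_int : ∀ n, Integrable (M n) μ := by
    intro n; rw [hMapply n]; exact integrable_finset_sum _ fun t _ => hΔ_int t
  -- Δ is 𝒢 (t+1)-measurable
  have hΔ_sm : ∀ t, StronglyMeasurable[𝒢 (t + 1)] (Δ t) := by
    intro t
    by_cases ht : t = 0
    · simp only [hΔdef, if_pos ht]; exact stronglyMeasurable_const
    · simp only [hΔdef, if_neg ht]
      have h1 : StronglyMeasurable[𝒢 (t + 1)] (w t) :=
        ((hwmeas t).mono (𝒢.mono t.le_succ) le_rfl).stronglyMeasurable
      have h2 : StronglyMeasurable[𝒢 (t + 1)] (I t) :=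
        (((hImeasF t).mono (hF𝒢 t) le_rfl)).stronglyMeasurable
      have h3 : StronglyMeasurable[𝒢 (t + 1)] (p t) := (hp_meas t).mono (𝒢.mono t.le_succ)
      exact (h1.mul h2).sub (h1.mul h3)
  have hM_adapted : StronglyAdapted 𝒢 M := by
    intro n
    rw [hMapply n]
    refine Finset.stronglyMeasurable_fun_sum _ fun t ht => ?_
    exact (hΔ_sm t).mono (𝒢.mono (Nat.succ_le_of_lt (Finset.mem_range.mp ht)))
  -- martingale property
  have hΔ_ce : ∀ n, μ[Δ n | 𝒢 n] =ᵐ[μ] 0 := by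
    intro n
    by_cases hn : n = 0
    · have : Δ n = (0 : Ω → ℝ) := by simp only [hΔdef, if_pos hn]
      rw [this]; simpa using condExp_zero (m := (𝒢 n : MeasurableSpace Ω)) (μ := μ)
    · have hΔn : Δ n = w n * I n - w n * p n := by simp only [hΔdef, if_neg hn]
      rw [hΔn]
      have h1 : μ[w n * I n | 𝒢 n] =ᵐ[μ] w n * p n := by
        have := condExp_mul_of_stronglyMeasurable_left (μ := μ) (m := (𝒢 n : MeasurableSpace Ω))
          (hwmeas n).stronglyMeasurable (hwI_int n) (hI_int n)
        rw [hpdef]; exact this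
      have h2 : μ[w n * p n | 𝒢 n] = w n * p n :=
        condExp_of_stronglyMeasurable (𝒢.le n)
          ((hwmeas n).stronglyMeasurable.mul (hp_meas n)) (hwp_int n)
      calc μ[w n * I n - w n * p n | 𝒢 n]
          =ᵐ[μ] μ[w n * I n | 𝒢 n] - μ[w n * p n | 𝒢 n] := condExp_sub (hwI_int n) (hwp_int n) _
        _ =ᵐ[μ] w n * p n - w n * p n := by
            rw [h2]; exact h1.sub (Filter.EventuallyEq.refl _ _)
        _ = 0 := sub_self _
  have hM_mart : Martingale M 𝒢 μ := by
    refine martingale_nat hM_adapted hM_int fun n => ?_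
    have hsplit : M (n + 1) = M n + Δ n := by
      simp only [hMdef]; exact Finset.sum_range_succ Δ n
    rw [hsplit]
    have h1 : μ[M n + Δ n | 𝒢 n] =ᵐ[μ] μ[M n | 𝒢 n] + μ[Δ n | 𝒢 n] :=
      condExp_add (hM_int n) (hΔ_int n) _
    have h2 : μ[M n | 𝒢 n] = M n :=
      condExp_of_stronglyMeasurable (𝒢.le n) (hM_adapted n) (hM_int n)
    refine Filter.EventuallyEq.symm (h1.trans ?_)
    rw [h2]
    filter_upwards [hΔ_ce n] with ω hω
    simp [hω]
  -- bounded increments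
  have hbddinc : ∀ᵐ ω ∂μ, ∀ i, |M (i + 1) ω - M i ω|
      ≤ ((⟨R + R, add_nonneg hR0 hR0⟩ : NNReal) : ℝ) := by
    have hall : ∀ᵐ ω ∂μ, ∀ t, |p t ω| ≤ 1 := ae_all_iff.mpr hp_abs
    filter_upwards [hall] with ω hω i
    have hMd : M (i + 1) ω - M i ω = Δ i ω := by
      rw [hMapply (i + 1), hMapply i]
      show (∑ t ∈ Finset.range (i + 1), Δ t ω) - (∑ t ∈ Finset.range i, Δ t ω) = Δ i ω
      rw [Finset.sum_range_succ]; ring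
    rw [hMd]
    show |Δ i ω| ≤ R + R
    by_cases hi : i = 0
    · simp only [hΔdef, if_pos hi, Pi.zero_apply]; simp; positivity
    · have hh : Δ i ω = w i ω * I i ω - w i ω * p i ω := by
        simp only [hΔdef, if_neg hi, Pi.sub_apply, Pi.mul_apply]
      rw [hh]
      calc |w i ω * I i ω - w i ω * p i ω| ≤ |w i ω * I i ω| + |w i ω * p i ω| :=
            abs_sub _ _
        _ ≤ R * 1 + R * 1 := by
            refine add_le_add ?_ ?_
            · rw [abs_mul]
              refine mul_le_mul ?_ (hIabs i ω) (abs_nonneg _) hR0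
              rw [abs_of_nonneg (hw_nonneg i ω)]; exact hw_le i ω
            · rw [abs_mul]
              refine mul_le_mul ?_ (hω i) (abs_nonneg _) hR0
              rw [abs_of_nonneg (hw_nonneg i ω)]; exact hw_le i ω
        _ = R + R := by ring
  have hnotbot := hM_mart.ae_not_tendsto_atTop_atBot hbddinc
  -- identification of p with π on t ≥ 1
  have hpeq : ∀ᵐ ω ∂μ, ∀ t, 1 ≤ t → p t ω = π t a0 ω := by
    rw [ae_all_iff]
    intro t
    by_cases ht : 1 ≤ t
    · have h := hπ t a0 ht
      have h' : p t =ᵐ[μ] π t a0 := by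
        rw [hpdef, hIdef]
        exact h
      filter_upwards [h'] with ω hω _
      exact hω
    · filter_upwards with ω h; exact absurd h ht
  -- local clock facts
  have hNsucc : ∀ t, 1 ≤ t → ∀ ω, x t ω = x0 → N t x0 ω = N (t - 1) x0 ω + 1 := by
    intro t ht ω hxt
    obtain ⟨s, rfl⟩ : ∃ s, t = s + 1 := ⟨t - 1, (Nat.succ_pred_eq_of_pos ht).symm⟩
    rw [hN, hN, Finset.sum_range_succ, if_pos hxt]
    simp [Nat.succ_sub_one]
  have hw_eq : ∀ t, 1 ≤ t → ∀ ω, w t ω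
      = if x t ω = x0 then 1 / φ (N t x0 ω) else 0 := by
    intro t ht ω
    simp only [hwdef]
    by_cases hxt : x t ω = x0
    · rw [if_pos hxt, if_pos hxt, hNsucc t ht ω hxt]
    · rw [if_neg hxt, if_neg hxt]
  -- final a.e. argument
  filter_upwards [hio x0, hnotbot, hpeq, ae_all_iff.mpr hp_nonneg] with ω hω1 hω2 hω3 hω4
  constructor
  · -- divergence
    set cnt : ℕ → ℕ := fun T => ∑ k ∈ Finset.range T, if x k ω = x0 then 1 else 0 with hcntdef
    have hNcnt : ∀ t, N t x0 ω = cnt (t + 1) := fun t => hN t x0 ω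
    have hcnt_tend : Tendsto cnt atTop atTop := by
      refine (tendsto_add_atTop_iff_nat 1).mp ?_
      have he : (fun t => cnt (t + 1)) = fun t => N t x0 ω := funext fun t => (hNcnt t).symm
      rw [he]; exact hω1
    have hGtend : Tendsto (fun n => ∑ j ∈ Finset.range n, c (j + 1) / φ (j + 1)) atTop atTop :=
      (not_summable_iff_tendsto_nat_atTop_of_nonneg
        (fun j => div_nonneg (hcpos _).le (hφpos _).le)).mp hdiv
    have hDtend : Tendsto (fun T => ∑ j ∈ Finset.range (cnt T), c (j + 1) / φ (j + 1))
        atTop atTop := hGtend.comp hcnt_tend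
    set e0 : ℝ := c (N 0 x0 ω) / φ (N 0 x0 ω) with he0def
    have he0 : 0 ≤ e0 := div_nonneg (hcpos _).le (hφpos _).le
    have hBlow : ∀ T, ∑ j ∈ Finset.range (cnt T), c (j + 1) / φ (j + 1)
        ≤ (∑ t ∈ Finset.range T, (if t = 0 then 0 else w t ω * p t ω)) + e0 := by
      intro T
      have hre := aux_reindex_sum x x0 ω (fun j => c j / φ j) T
      rw [hcntdef, ← hre]
      have hterm : ∀ t ∈ Finset.range T,
          (if x t ω = x0 then (fun j => c j / φ j)
            (∑ k ∈ Finset.range (t + 1), if x k ω = x0 then 1 else 0) else 0)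
          ≤ (if t = 0 then 0 else w t ω * p t ω) + (if t = 0 then e0 else 0) := by
        intro t _
        dsimp only
        by_cases ht : t = 0
        · subst ht
          rw [if_pos rfl, if_pos rfl]
          by_cases hxt : x 0 ω = x0
          · rw [if_pos hxt, ← hN]; simpa using he0def.ge
          · rw [if_neg hxt]; simpa using he0
        · rw [if_neg ht, if_neg ht, add_zero]
          by_cases hxt : x t ω = x0
          · rw [if_pos hxt, ← hN]
            have hwt : w t ω = 1 / φ (N t x0 ω) := by
              rw [hw_eq t (Nat.one_le_iff_ne_zero.mpr ht) ω, if_pos hxt]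
            have hpt : c (N t x0 ω) ≤ p t ω := by
              rw [hω3 t (Nat.one_le_iff_ne_zero.mpr ht)]
              have h5 := hπc t a0 ω
              rwa [hxt] at h5
            rw [hwt]
            have hφt := hφpos (N t x0 ω)
            calc c (N t x0 ω) / φ (N t x0 ω)
                = (1 / φ (N t x0 ω)) * c (N t x0 ω) := by ring
              _ ≤ (1 / φ (N t x0 ω)) * p t ω := by
                  refine mul_le_mul_of_nonneg_left hpt ?_
                  positivity
          · rw [if_neg hxt]
            have hwt : w t ω = 0 := by
              rw [hw_eq t (Nat.one_le_iff_ne_zero.mpr ht) ω, if_neg hxt]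
            rw [hwt, zero_mul]
      calc ∑ t ∈ Finset.range T,
            (if x t ω = x0 then (fun j => c j / φ j)
              (∑ k ∈ Finset.range (t + 1), if x k ω = x0 then 1 else 0) else 0)
          ≤ ∑ t ∈ Finset.range T,
              ((if t = 0 then 0 else w t ω * p t ω) + (if t = 0 then e0 else 0)) :=
            Finset.sum_le_sum hterm
        _ = (∑ t ∈ Finset.range T, (if t = 0 then 0 else w t ω * p t ω))
            + ∑ t ∈ Finset.range T, (if t = 0 then e0 else 0) := Finset.sum_add_distrib
        _ ≤ (∑ t ∈ Finset.range T, (if t = 0 then 0 else w t ω * p t ω)) + e0 := by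
            refine add_le_add (le_refl _) ?_
            have h6 : ∑ t ∈ Finset.range T, (if t = 0 then e0 else 0)
                = if 0 ∈ Finset.range T then e0 else 0 :=
              Finset.sum_ite_eq' (Finset.range T) 0 (fun _ => e0)
            rw [h6]; split_ifs
            exacts [le_rfl, he0]
    have hB_tend : Tendsto
        (fun T => ∑ t ∈ Finset.range T, (if t = 0 then 0 else w t ω * p t ω)) atTop atTop := by
      have hf := tendsto_atTop_add_const_right atTop (-e0) hDtend
      exact tendsto_atTop_mono (fun T => by have := hBlow T; linarith) hf
    by_contra hA
    have hAmono : Monotone fun T => ∑ t ∈ Finset.range T,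
        (if x t ω = x0 ∧ a t ω = a0 then α t ω else 0) := by
      intro s t hst
      refine Finset.sum_le_sum_of_subset_of_nonneg (Finset.range_subset_range.mpr hst) ?_
      intro i _ _
      split_ifs with h
      · rw [hα]; have := hφpos (N i (x i ω) ω); positivity
      · exact le_rfl
    have hbddA : BddAbove (Set.range fun T => ∑ t ∈ Finset.range T,
        (if x t ω = x0 ∧ a t ω = a0 then α t ω else 0)) := by
      by_contra hb
      exact hA (tendsto_atTop_atTop_of_monotone' hAmono hb)
    obtain ⟨K, hK⟩ := hbddA
    have hKbound : ∀ T, ∑ t ∈ Finset.range T,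
        (if x t ω = x0 ∧ a t ω = a0 then α t ω else 0) ≤ K := fun T => hK ⟨T, rfl⟩
    have hA''le : ∀ T, ∑ t ∈ Finset.range T, (if t = 0 then 0 else w t ω * I t ω) ≤ K := by
      intro T
      refine le_trans (Finset.sum_le_sum (fun t _ => ?_)) (hKbound T)
      by_cases ht : t = 0
      · rw [if_pos ht]
        split_ifs with h
        · rw [hα]; have := hφpos (N t (x t ω) ω); positivity
        · exact le_rfl
      · rw [if_neg ht]
        by_cases hxt : x t ω = x0
        · by_cases hat : a t ω = a0
          · have hwt : w t ω = 1 / φ (N t x0 ω) := by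
              rw [hw_eq t (Nat.one_le_iff_ne_zero.mpr ht) ω, if_pos hxt]
            have hIt : I t ω = 1 := by simp only [hIdef]; rw [if_pos hat]
            rw [if_pos ⟨hxt, hat⟩, hwt, hIt, mul_one, hα, hxt]
          · have hIt : I t ω = 0 := by simp only [hIdef]; rw [if_neg hat]
            rw [if_neg (by tauto), hIt, mul_zero]
        · have hwt : w t ω = 0 := by
            rw [hw_eq t (Nat.one_le_iff_ne_zero.mpr ht) ω, if_neg hxt]
          rw [if_neg (by tauto), hwt, zero_mul]
    have hMsplit : ∀ T, M T ω
        = (∑ t ∈ Finset.range T, (if t = 0 then 0 else w t ω * I t ω))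
          - (∑ t ∈ Finset.range T, (if t = 0 then 0 else w t ω * p t ω)) := by
      intro T
      have h0 : M T ω = ∑ t ∈ Finset.range T, Δ t ω := congrFun (hMapply T) ω
      rw [h0, ← Finset.sum_sub_distrib]
      refine Finset.sum_congr rfl fun t _ => ?_
      by_cases ht : t = 0
      · simp only [hΔdef, if_pos ht, Pi.zero_apply]; ring
      · simp only [hΔdef, if_neg ht, Pi.sub_apply, Pi.mul_apply]
    have hMtop : Tendsto (fun T => M T ω) atTop atBot := by
      have h2 : Tendsto
          (fun T => -(∑ t ∈ Finset.range T, (if t = 0 then 0 else w t ω * p t ω)))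
          atTop atBot := tendsto_neg_atTop_atBot.comp hB_tend
      have h1 := tendsto_atBot_add_const_left atTop K h2
      refine tendsto_atBot_mono (fun T => ?_) h1
      rw [hMsplit T]
      have := hA''le T
      linarith
    exact hω2 hMtop
  · -- square summability
    refine summable_of_sum_range_le (c := S) (fun t => sq_nonneg _) fun T => ?_
    calc ∑ t ∈ Finset.range T, (if x t ω = x0 ∧ a t ω = a0 then α t ω else 0) ^ 2
        ≤ ∑ t ∈ Finset.range T, (if x t ω = x0 then
            (fun j => (1 / φ j) ^ 2) (∑ k ∈ Finset.range (t + 1),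
              if x k ω = x0 then 1 else 0) else 0) := by
          refine Finset.sum_le_sum fun t _ => ?_
          dsimp only
          by_cases hxt : x t ω = x0
          · rw [if_pos hxt, ← hN]
            by_cases hat : a t ω = a0
            · rw [if_pos ⟨hxt, hat⟩, hα, hxt]
            · rw [if_neg (by tauto)]
              norm_num
              positivity
          · rw [if_neg (by tauto), if_neg hxt]; norm_num
      _ = ∑ j ∈ Finset.range (∑ k ∈ Finset.range T, if x k ω = x0 then 1 else 0),
            (1 / φ (j + 1)) ^ 2 := aux_reindex_sum x x0 ω (fun j => (1 / φ j) ^ 2) T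
      _ ≤ S := by
          rw [hSdef]
          exact Summable.sum_le_tsum _ (fun j _ => sq_nonneg _) hsq
end

section
/- Let X and A be finite, q a transition kernel. The MDP is communicating (for all x, y there is a deterministic stationary strategy g and n with Pⁿ(g)(x,y) > 0) if and only if P(g) is irreducible for every completely mixed stationary randomized strategy g. -/
open Matrix Finset

section helpers
variable {X : Type*} [Fintype X] [DecidableEq X]

lemma pow_entry_nonneg (M : Matrix X X ℝ) (h : ∀ x y, 0 ≤ M x y) :
    ∀ m x y, 0 ≤ (M ^ m) x y := by
  intro m
  induction m with
  | zero =>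
    intro x y
    simp only [pow_zero, Matrix.one_apply]
    split <;> norm_num
  | succ n ih =>
    intro x y
    rw [pow_succ, Matrix.mul_apply]
    exact Finset.sum_nonneg fun z _ => mul_nonneg (ih x z) (h z y)

lemma path_to_pow (M : Matrix X X ℝ) (h : ∀ x y, 0 ≤ M x y) (m : ℕ) (f : ℕ → X)
    (hf : ∀ i < m, 0 < M (f i) (f (i + 1))) : 0 < (M ^ m) (f 0) (f m) := by
  induction m with
  | zero => simp [pow_zero, Matrix.one_apply]
  | succ n ih =>
    rw [pow_succ, Matrix.mul_apply]
    have h1 : 0 < (M ^ n) (f 0) (f n) * M (f n) (f (n + 1)) :=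
      mul_pos (ih fun i hi => hf i (hi.trans (Nat.lt_succ_self n)))
        (hf n (Nat.lt_succ_self n))
    refine lt_of_lt_of_le h1 ?_
    exact Finset.single_le_sum
      (f := fun z => (M ^ n) (f 0) z * M z (f (n + 1)))
      (fun z _ => mul_nonneg (pow_entry_nonneg M h n _ _) (h _ _)) (Finset.mem_univ (f n))

lemma pow_to_path (M : Matrix X X ℝ) (h : ∀ x y, 0 ≤ M x y) :
    ∀ m x y, 0 < (M ^ m) x y →
      ∃ f : ℕ → X, f 0 = x ∧ f m = y ∧ ∀ i < m, 0 < M (f i) (f (i + 1)) := by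
  intro m
  induction m with
  | zero =>
    intro x y hp
    simp only [pow_zero, Matrix.one_apply] at hp
    have hxy : x = y := by by_contra h'; simp [h'] at hp
    exact ⟨fun _ => x, rfl, hxy.symm ▸ rfl, by omega⟩
  | succ n ih =>
    intro x y hp
    rw [pow_succ, Matrix.mul_apply] at hp
    obtain ⟨z, _, hz⟩ : ∃ z ∈ Finset.univ, 0 < (M ^ n) x z * M z y := by
      by_contra hc
      push_neg at hc
      have : ∑ z, (M ^ n) x z * M z y ≤ 0 :=
        Finset.sum_nonpos fun z hz => hc z hz
      linarith
    have h1 : 0 < (M ^ n) x z := by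
      rcases lt_or_ge 0 ((M ^ n) x z) with h' | h'
      · exact h'
      · nlinarith [h z y]
    have h2 : 0 < M z y := by
      nlinarith [pow_entry_nonneg M h n x z]
    obtain ⟨f, hf0, hfn, hfs⟩ := ih x z h1
    refine ⟨fun i => if i = n + 1 then y else f i, by simp [hf0], by simp, ?_⟩
    intro i hi
    rcases Nat.lt_or_ge i n with hin | hin
    · have : i ≠ n + 1 := by omega
      have : i + 1 ≠ n + 1 := by omega
      simpa [‹i ≠ n + 1›, this, Nat.ne_of_lt hin] using hfs i hin
    · have hieq : i = n := by omega
      have hne : i ≠ n + 1 := by omega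
      simpa [hieq, hne, hfn] using h2

end helpers

lemma key_lemma {X A : Type*} [Fintype X] [Fintype A] [Nonempty A] [DecidableEq X]
    (q : X → A → X → ℝ) (hqnn : ∀ x a y, 0 ≤ q x a y) :
    ∀ m : ℕ, 1 ≤ m → ∀ f : ℕ → X, (∀ i < m, ∃ a, 0 < q (f i) a (f (i + 1))) →
      ∃ b : X → A, ∃ m' : ℕ, 1 ≤ m' ∧
        0 < (((Matrix.of fun x' y' => q x' (b x') y') : Matrix X X ℝ) ^ m') (f 0) (f m) := by
  intro m
  induction m using Nat.strong_induction_on with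
  | _ m ih =>
  intro hm f hf
  classical
  by_cases hinj : ∀ i j, i < m → j < m → f i = f j → i = j
  · -- sources distinct: build deterministic strategy
    have hf' : ∀ i : ℕ, ∃ a : A, i < m → 0 < q (f i) a (f (i + 1)) := by
      intro i
      by_cases h : i < m
      · obtain ⟨a, ha⟩ := hf i h
        exact ⟨a, fun _ => ha⟩
      · exact ⟨Classical.arbitrary A, fun h' => absurd h' h⟩
    choose a ha using hf'
    set b : X → A := fun s =>
      if h : ∃ j, j < m ∧ f j = s then a (Nat.find h) else Classical.arbitrary A with hb
    refine ⟨b, m, hm, ?_⟩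
    apply path_to_pow _ (fun x y => hqnn x (b x) y) m f
    intro i hi
    have hcond : ∃ j, j < m ∧ f j = f i := ⟨i, hi, rfl⟩
    have heq : Nat.find hcond = i :=
      hinj _ _ (Nat.find_spec hcond).1 hi (Nat.find_spec hcond).2
    have hbv : b (f i) = a i := by
      rw [hb]
      simp only [dif_pos hcond, heq]
    simpa [Matrix.of_apply, hbv] using ha i hi
  · -- a repeated source: splice out the loop and use strong induction
    push_neg at hinj
    obtain ⟨i, j, hi, hj, hfe, hij⟩ := hinj
    have main : ∀ i j : ℕ, i < j → j < m → f i = f j →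
        ∃ b : X → A, ∃ m' : ℕ, 1 ≤ m' ∧
          0 < (((Matrix.of fun x' y' => q x' (b x') y') : Matrix X X ℝ) ^ m') (f 0) (f m) := by
      intro i j hij' hj' hfe'
      set d := j - i with hd
      set m' := m - d with hm'
      have hd1 : 1 ≤ d := by omega
      have hm'1 : 1 ≤ m' := by omega
      have hm'lt : m' < m := by omega
      set f' : ℕ → X := fun k => if k ≤ i then f k else f (k + d) with hf'def
      have hsteps : ∀ k < m', ∃ a, 0 < q (f' k) a (f' (k + 1)) := by
        intro k hk
        rcases Nat.lt_or_ge k i with h1 | h1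
        · have e1 : f' k = f k := by simp [hf'def, Nat.le_of_lt h1]
          have e2 : f' (k + 1) = f (k + 1) := by simp [hf'def, Nat.succ_le_of_lt h1]
          rw [e1, e2]
          exact hf k (by omega)
        · rcases Nat.eq_or_lt_of_le h1 with h2 | h2
          · -- k = i
            have e1 : f' k = f j := by
              simp [hf'def, ← h2, hfe']
            have e2 : f' (k + 1) = f (j + 1) := by
              have : ¬ (k + 1 ≤ i) := by omega
              have e3 : k + 1 + d = j + 1 := by omega
              simp [hf'def, this, e3]
            rw [e1, e2]
            exact hf j hj'
          · have e1 : f' k = f (k + d) := by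
              have : ¬ (k ≤ i) := by omega
              simp [hf'def, this]
            have e2 : f' (k + 1) = f (k + d + 1) := by
              have h3 : ¬ (k + 1 ≤ i) := by omega
              have e3 : k + 1 + d = k + d + 1 := by omega
              simp [hf'def, h3, e3]
            rw [e1, e2]
            exact hf (k + d) (by omega)
      obtain ⟨b, m'', h1, h2⟩ := ih m' hm'lt hm'1 f' hsteps
      have e0 : f' 0 = f 0 := by simp [hf'def]
      have em : f' m' = f m := by
        have h3 : ¬ (m' ≤ i) := by omega
        have e3 : m' + d = m := by omega
        simp [hf'def, h3, e3]
      rw [e0, em] at h2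
      exact ⟨b, m'', h1, h2⟩
    rcases lt_or_gt_of_ne hij with h | h
    · exact main i j h hj hfe
    · exact main j i h hi hfe.symm


/-- Filar–Schultz characterization: a finite MDP is communicating (for all
`x, y` there is a deterministic stationary strategy `b` and `m ≥ 1` with
`Pᵐ(b)(x,y) > 0`) iff `P(g)` is irreducible for every completely mixed
stationary randomized strategy `g`. -/
theorem stmt_13 {X A : Type*} [Fintype X] [Fintype A] [Nonempty X] [Nonempty A]
    [DecidableEq X] [DecidableEq A]
    (q : X → A → X → ℝ)
    (hqnn : ∀ x a y, 0 ≤ q x a y) (hq1 : ∀ x a, ∑ y, q x a y = 1) :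
    (∀ x y : X, ∃ b : X → A, ∃ m : ℕ, 1 ≤ m ∧
        0 < (((Matrix.of fun x' y' => q x' (b x') y') : Matrix X X ℝ) ^ m) x y) ↔
    (∀ g : X → A → ℝ, (∀ x, ∑ a, g x a = 1) → (∀ x a, 0 < g x a) →
      ∀ x y : X, ∃ m : ℕ, 1 ≤ m ∧
        0 < (((Matrix.of fun x' y' => ∑ a, q x' a y' * g x' a) : Matrix X X ℝ) ^ m) x y) := by
  constructor
  · intro h g hg1 hgpos x y
    obtain ⟨b, m, hm, hpos⟩ := h x y
    refine ⟨m, hm, ?_⟩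
    have hMnn : ∀ x y, 0 ≤ ((Matrix.of fun x' y' => q x' (b x') y') : Matrix X X ℝ) x y :=
      fun x y => hqnn x (b x) y
    have hNnn : ∀ x y,
        0 ≤ ((Matrix.of fun x' y' => ∑ a, q x' a y' * g x' a) : Matrix X X ℝ) x y :=
      fun x y => Finset.sum_nonneg fun a _ => mul_nonneg (hqnn x a y) (hgpos x a).le
    obtain ⟨f, hf0, hfm, hfs⟩ := pow_to_path _ hMnn m x y hpos
    subst hf0; subst hfm
    apply path_to_pow _ hNnn m f
    intro i hi
    have hstep : 0 < q (f i) (b (f i)) (f (i + 1)) := by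
      simpa [Matrix.of_apply] using hfs i hi
    have hterm : 0 < q (f i) (b (f i)) (f (i + 1)) * g (f i) (b (f i)) :=
      mul_pos hstep (hgpos _ _)
    have hle : q (f i) (b (f i)) (f (i + 1)) * g (f i) (b (f i)) ≤
        ∑ a, q (f i) a (f (i + 1)) * g (f i) a :=
      Finset.single_le_sum (f := fun a => q (f i) a (f (i + 1)) * g (f i) a)
        (fun a _ => mul_nonneg (hqnn _ _ _) (hgpos _ _).le) (Finset.mem_univ _)
    simpa [Matrix.of_apply] using lt_of_lt_of_le hterm hle
  · intro h x y
    classical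
    set g : X → A → ℝ := fun _ _ => (Fintype.card A : ℝ)⁻¹ with hgdef
    have hcard : (0 : ℝ) < Fintype.card A := by
      exact_mod_cast Fintype.card_pos
    have hg1 : ∀ x, ∑ a, g x a = 1 := by
      intro x
      simp [hgdef, Finset.sum_const, Finset.card_univ]
    have hgpos : ∀ x a, 0 < g x a := fun x a => by
      simp [hgdef]
      positivity
    obtain ⟨m, hm, hpos⟩ := h g hg1 hgpos x y
    have hNnn : ∀ x y,
        0 ≤ ((Matrix.of fun x' y' => ∑ a, q x' a y' * g x' a) : Matrix X X ℝ) x y :=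
      fun x y => Finset.sum_nonneg fun a _ => mul_nonneg (hqnn x a y) (hgpos x a).le
    obtain ⟨f, hf0, hfm, hfs⟩ := pow_to_path _ hNnn m x y hpos
    have hsteps : ∀ i < m, ∃ a, 0 < q (f i) a (f (i + 1)) := by
      intro i hi
      by_contra hc
      push_neg at hc
      have hz : ∀ a, q (f i) a (f (i + 1)) = 0 :=
        fun a => le_antisymm (hc a) (hqnn _ _ _)
      have := hfs i hi
      simp [Matrix.of_apply, hz] at this
    obtain ⟨b, m', h1, h2⟩ := key_lemma q hqnn m hm f hsteps
    rw [hf0, hfm] at h2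
    exact ⟨b, m', h1, h2⟩
end
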